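/- Let k : ℝⁿ × ℝⁿ → ℝ be a strictly positive kernel, fix x ∈ ℝⁿ and points y⁺₁, …, y⁺_N, y⁻₁, …, y⁻_N ∈ ℝⁿ (equal counts N on both sides). Define the jointly-normalized weights A⁺ⱼ = k(x, y⁺ⱼ) / (Σ_{m=1}^N k(x, y⁺ₘ) + Σ_{m=1}^N k(x, y⁻ₘ)) and A⁻ⱼ = k(x, y⁻ⱼ) / (Σ_{m=1}^N k(x, y⁺ₘ) + Σ_{m=1}^N k(x, y⁻ₘ)), then W⁺ⱼ = A⁺ⱼ · Σ_{m=1}^N A⁻ₘ and W⁻ⱼ = A⁻ⱼ · Σ_{m=1}^N A⁺ₘ, and the resulting field V̄(x) = Σ_{j=1}^N W⁺ⱼ y⁺ⱼ − Σ_{j=1}^N W⁻ⱼ y⁻ⱼ. Let Z_p = (1/N) Σⱼ k(x, y⁺ⱼ) and Z_q = (1/N) Σⱼ k(x, y⁻ⱼ). Then V̄(x) = (1/(Z_p + Z_q)²) · (1/N²) Σ_{m=1}^N Σ_{j=1}^N k(x, y⁺ₘ) k(x, y⁻ⱼ) (y⁺ₘ − y⁻ⱼ). In particular, V̄ differs from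 the drift field V(x) = (1/(Z_p Z_q)) · (1/N²) Σₘ Σⱼ k(x, y⁺ₘ) k(x, y⁻ⱼ)(y⁺ₘ − y⁻ⱼ) by the normalization factor: V̄ carries 1/(Z_p + Z_q)² instead of 1/(Z_p Z_q). -/
import Mathlib


noncomputable section

/-- **the implemented field carries the wrong normalization.** With
jointly-normalized softmax weights over the concatenation of positive and negative
samples (equal counts `N`), the resulting field
`V̄(x) = Σⱼ W⁺ⱼ y⁺ⱼ − Σⱼ W⁻ⱼ y⁻ⱼ` equals
`(1/(Z_p + Z_q)²)·(1/N²) ΣₘΣⱼ k(x,y⁺ₘ)k(x,y⁻ⱼ)(y⁺ₘ − y⁻ⱼ)`; in particular it differs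
from the drift field `V(x) = (1/(Z_p Z_q))·(1/N²) ΣₘΣⱼ k(x,y⁺ₘ)k(x,y⁻ⱼ)(y⁺ₘ − y⁻ⱼ)`
by carrying the factor `1/(Z_p + Z_q)²` instead of `1/(Z_p Z_q)`, i.e.
`V̄ = (Z_p Z_q/(Z_p + Z_q)²) • V`. -/
theorem implemented_drift_field_normalization {n N : ℕ} (hN : 0 < N)
    (k : EuclideanSpace ℝ (Fin n) → EuclideanSpace ℝ (Fin n) → ℝ)
    (hk : ∀ u v : EuclideanSpace ℝ (Fin n), 0 < k u v)
    (x : EuclideanSpace ℝ (Fin n))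
    (yp yn : Fin N → EuclideanSpace ℝ (Fin n))
    (S : ℝ) (hS : S = ∑ m, k x (yp m) + ∑ m, k x (yn m))
    (Ap An : Fin N → ℝ)
    (hAp : ∀ j, Ap j = k x (yp j) / S) (hAn : ∀ j, An j = k x (yn j) / S)
    (Wp Wn : Fin N → ℝ)
    (hWp : ∀ j, Wp j = Ap j * ∑ m, An m) (hWn : ∀ j, Wn j = An j * ∑ m, Ap m)
    (Vbar : EuclideanSpace ℝ (Fin n))
    (hVbar : Vbar = ∑ j, Wp j • yp j - ∑ j, Wn j • yn j)
    (Zp Zq : ℝ)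
    (hZp : Zp = (1 / (N : ℝ)) * ∑ j, k x (yp j))
    (hZq : Zq = (1 / (N : ℝ)) * ∑ j, k x (yn j))
    (V : EuclideanSpace ℝ (Fin n))
    (hV : V = ((Zp * Zq)⁻¹ * ((N : ℝ) ^ 2)⁻¹) •
      ∑ m, ∑ j, (k x (yp m) * k x (yn j)) • (yp m - yn j)) :
    Vbar = (((Zp + Zq) ^ 2)⁻¹ * ((N : ℝ) ^ 2)⁻¹) •
        ∑ m, ∑ j, (k x (yp m) * k x (yn j)) • (yp m - yn j) ∧
    Vbar = (Zp * Zq / (Zp + Zq) ^ 2) • V := by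
  have hN' : (N : ℝ) ≠ 0 := Nat.cast_ne_zero.mpr hN.ne'
  have hSp : (0:ℝ) < ∑ m, k x (yp m) :=
    Finset.sum_pos (fun i _ => hk x (yp i)) ⟨⟨0, hN⟩, Finset.mem_univ _⟩
  have hSn : (0:ℝ) < ∑ m, k x (yn m) :=
    Finset.sum_pos (fun i _ => hk x (yn i)) ⟨⟨0, hN⟩, Finset.mem_univ _⟩
  have hSpos : 0 < S := hS ▸ add_pos hSp hSn
  have hSne : S ≠ 0 := hSpos.ne'
  have hZp0 : Zp ≠ 0 := by
    rw [hZp]; positivity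
  have hZq0 : Zq ≠ 0 := by
    rw [hZq]; positivity
  have hSNZ : S = (N : ℝ) * (Zp + Zq) := by
    rw [hS, hZp, hZq]; field_simp
  -- the double sum splits
  have hsplit : ∑ m, ∑ j, (k x (yp m) * k x (yn j)) • (yp m - yn j)
      = (∑ m, (k x (yp m) * ∑ j, k x (yn j)) • yp m)
        - ∑ j, ((k x (yn j) * ∑ m, k x (yp m)) • yn j) := by
    simp only [smul_sub, Finset.sum_sub_distrib]
    congr 1
    · refine Finset.sum_congr rfl fun m _ => ?_
      rw [← Finset.sum_smul, ← Finset.mul_sum]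
    · rw [Finset.sum_comm]
      refine Finset.sum_congr rfl fun j _ => ?_
      rw [← Finset.sum_smul, ← Finset.sum_mul, mul_comm]
  have hAnsum : ∑ m, An m = (∑ m, k x (yn m)) / S := by
    simp [hAn, Finset.sum_div]
  have hApsum : ∑ m, Ap m = (∑ m, k x (yp m)) / S := by
    simp [hAp, Finset.sum_div]
  have hVbar2 : Vbar = (S^2)⁻¹ •
      ∑ m, ∑ j, (k x (yp m) * k x (yn j)) • (yp m - yn j) := by
    rw [hVbar, hsplit, smul_sub, Finset.smul_sum, Finset.smul_sum]
    congr 1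
    · refine Finset.sum_congr rfl fun j _ => ?_
      rw [smul_smul]
      congr 1
      rw [hWp, hAp, hAnsum, div_mul_div_comm, ← sq, div_eq_inv_mul]
    · refine Finset.sum_congr rfl fun j _ => ?_
      rw [smul_smul]
      congr 1
      rw [hWn, hAn, hApsum, div_mul_div_comm, ← sq, div_eq_inv_mul]
  have hcoef : (S^2)⁻¹ = ((Zp + Zq) ^ 2)⁻¹ * ((N : ℝ) ^ 2)⁻¹ := by
    rw [hSNZ, mul_pow, mul_inv, mul_comm]
  have hzz : Zp * Zq ≠ 0 := mul_ne_zero hZp0 hZq0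
  constructor
  · rw [hVbar2, hcoef]
  · rw [hVbar2, hV, smul_smul, hcoef]
    congr 1
    have : Zp * Zq / (Zp + Zq) ^ 2 * ((Zp * Zq)⁻¹ * ((N:ℝ) ^ 2)⁻¹)
        = (Zp * Zq * (Zp * Zq)⁻¹) * (((Zp + Zq) ^ 2)⁻¹ * ((N:ℝ) ^ 2)⁻¹) := by
      rw [div_eq_mul_inv]; ring
    rw [this, mul_inv_cancel₀ hzz, one_mul]
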